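/- On the span of polynomials, for every n ≥ 1, (IR₀)ⁿ = ∑_{k=1}ⁿ Λ_{k,n} Iᵏ R₀ᵏ, where the diagonal operators Λ_{k,n} satisfy the recurrence Λ_{k,n} = Λ_{k−1,n−1} + (∑_{l=1}^k D₀^{(l)}) Λ_{k,n−1} with Λ_{n,n} = id, Λ_{0,n} = 0, and Λ_{k,n} = 0 for other out-of-range indices, and D₀ = [R₀, I]. -/

import Mathlib

/-- Backward shift `R₀` on coefficient sequences. -/
def backShift (f : ℕ → ℂ) : ℕ → ℂ := fun k => f (k + 1)

/-- Integration operator `I` on coefficient sequences: `I zⁿ = z^{n+1}/(n+1)`. -/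
noncomputable def intOp (f : ℕ → ℂ) : ℕ → ℂ :=
  fun k => if k = 0 then 0 else f (k - 1) / (k : ℂ)

/-- Diagonal entries of `D₀ = [R₀, I] = diag(1, −1/2, −1/6, …, −1/(n(n+1)), …)`. -/
noncomputable def d0 : ℕ → ℂ := fun m => if m = 0 then 1 else -(1 / ((m : ℂ) * ((m : ℂ) + 1)))

/-- Entries of the `j`-fold forward diagonal shift `D^{(j)}`. -/
def fwdShiftK (d : ℕ → ℂ) (j : ℕ) : ℕ → ℂ := fun m => if m < j then 0 else d (m - j)

noncomputable def wfun (k m : ℕ) : ℂ :=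
  if m < k then 0 else (∏ i ∈ Finset.range k, ((m - i : ℕ) : ℂ))⁻¹

lemma wfun_succ (k j : ℕ) : wfun (k+1) (j+1) = wfun k j / ((j : ℂ) + 1) := by
  unfold wfun
  by_cases h : j < k
  · have h' : j + 1 < k + 1 := by omega
    simp [h, h']
  · have h' : ¬ (j + 1 < k + 1) := by omega
    simp only [h, h', if_false]
    rw [Finset.prod_range_succ']
    have h1 : ∀ i : ℕ, (j + 1 - (i + 1)) = j - i := fun i => by omega
    simp only [h1, Nat.sub_zero, mul_inv, Nat.cast_add, Nat.cast_one]
    rw [div_eq_mul_inv]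

lemma wfun_zero (k : ℕ) (hk : 1 ≤ k) : wfun k 0 = 0 := by
  unfold wfun; rw [if_pos (by omega)]

lemma iter_eq (k : ℕ) (f : ℕ → ℂ) (m : ℕ) :
    intOp^[k] (backShift^[k] f) m = f m * wfun k m := by
  induction k generalizing f m with
  | zero => simp [wfun]
  | succ k ih =>
    rw [Function.iterate_succ_apply (f := backShift), Function.iterate_succ_apply' (f := intOp)]
    cases m with
    | zero => rw [wfun_zero _ (by omega)]; simp [intOp]
    | succ j =>
      have : intOp (intOp^[k] (backShift^[k] (backShift f))) (j+1)
          = (intOp^[k] (backShift^[k] (backShift f))) j / ((j : ℂ) + 1) := by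
        simp [intOp]
      rw [this, ih, wfun_succ]
      simp only [backShift]
      ring

noncomputable def ufun (m l : ℕ) : ℂ := if l < m then -(((m - l : ℕ) : ℂ))⁻¹ else 0

lemma fwd_eq (m i : ℕ) : fwdShiftK d0 (i+1) m = ufun m (i+1) - ufun m i := by
  rcases lt_trichotomy (i+1) m with h | h | h
  · have h1 : ¬ m < i + 1 := by omega
    have h3 : i < m := by omega
    have h4 : m - (i+1) ≠ 0 := by omega
    simp only [fwdShiftK, ufun, d0, if_neg h1, if_pos h, if_pos h3, if_neg h4]
    have h5 : m - i = (m - (i+1)) + 1 := by omega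
    rw [h5]
    set a := m - (i + 1) with hadef
    have ha0 : (a : ℂ) ≠ 0 := Nat.cast_ne_zero.mpr h4
    have ha2 : ((a : ℂ) + 1) ≠ 0 := Nat.cast_add_one_ne_zero a
    push_cast
    field_simp
    try ring
  · have h1 : ¬ m < i + 1 := by omega
    have h2 : ¬ (i + 1 < m) := by omega
    have h3 : i < m := by omega
    have h4 : m - (i+1) = 0 := by omega
    have h5 : m - i = 1 := by omega
    simp only [fwdShiftK, ufun, d0, if_neg h1, if_neg h2, if_pos h3, h4, h5, if_pos rfl]
    norm_num
  · have h1 : m < i + 1 := h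
    have h2 : ¬ (i + 1 < m) := by omega
    have h3 : ¬ (i < m) := by omega
    simp only [fwdShiftK, ufun, if_pos h1, if_neg h2, if_neg h3]
    ring

lemma S_eq (m k : ℕ) :
    ∑ l ∈ Finset.Icc 1 k, fwdShiftK d0 l m = ufun m k - ufun m 0 := by
  rw [← Finset.Ico_add_one_right_eq_Icc, Finset.sum_Ico_eq_sum_range]
  simp only [Nat.add_sub_cancel, Nat.succ_sub_one]
  have : ∀ i, fwdShiftK d0 (1 + i) m = ufun m (i+1) - ufun m i := by
    intro i; rw [Nat.add_comm]; exact fwd_eq m i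
  rw [Finset.sum_congr rfl (fun i _ => this i)]
  exact Finset.sum_range_sub (ufun m) k

lemma prod_ne (k m : ℕ) (h : k ≤ m) : (∏ i ∈ Finset.range k, ((m - i : ℕ) : ℂ)) ≠ 0 := by
  rw [Finset.prod_ne_zero_iff]
  intro i hi
  rw [Finset.mem_range] at hi
  have : m - i ≠ 0 := by omega
  exact Nat.cast_ne_zero.mpr this

lemma key (k m : ℕ) (hk : 1 ≤ k) :
    (if m = 0 then 0 else wfun k m / (m : ℂ))
      = wfun (k+1) m + (∑ l ∈ Finset.Icc 1 k, fwdShiftK d0 l m) * wfun k m := by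
  rw [S_eq]
  rcases Nat.eq_zero_or_pos m with rfl | hm
  · rw [if_pos rfl, wfun_zero k hk, wfun_zero (k+1) (by omega)]
    ring
  rw [if_neg (by omega)]
  rcases lt_trichotomy m k with h | h | h
  · have h1 : m < k + 1 := by omega
    simp only [wfun, if_pos h, if_pos h1]
    ring
  · subst h
    have h1 : ¬ (m < m) := lt_irrefl m
    have h2 : m < m + 1 := by omega
    have h3 : 0 < m := hm
    simp only [wfun, ufun, if_neg h1, if_pos h2, if_pos h3, Nat.sub_zero]
    rw [div_eq_mul_inv]
    ring
  · have h1 : ¬ (m < k) := by omega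
    have h2 : ¬ (m < k + 1) := by omega
    have h3 : k < m := h
    have h4 : 0 < m := hm
    simp only [wfun, ufun, if_neg h1, if_neg h2, if_pos h3, if_pos h4, Nat.sub_zero]
    rw [Finset.prod_range_succ]
    set p := ∏ i ∈ Finset.range k, ((m - i : ℕ) : ℂ) with hp
    have hpne : p ≠ 0 := prod_ne k m (by omega)
    have hbne : ((m - k : ℕ) : ℂ) ≠ 0 := Nat.cast_ne_zero.mpr (by omega)
    have hmne : ((m : ℕ) : ℂ) ≠ 0 := Nat.cast_ne_zero.mpr (by omega)
    have hcast : ((m - k : ℕ) : ℂ) = (m : ℂ) - (k : ℂ) := by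
      push_cast [Nat.cast_sub (le_of_lt h)]; ring
    field_simp
    rw [hcast]
    ring

lemma step_sum (Λ : ℕ → ℕ → ℕ → ℂ) (n m : ℕ) (hn : 1 ≤ n) (hm : m ≠ 0) (c : ℂ)
    (h1 : Λ n n m = 1) (h0 : Λ 0 n m = 0) (hout1 : Λ (n+1) n m = 0)
    (hrec1 : ∀ k, 1 ≤ k → k ≤ n → Λ k (n+1) m
      = Λ (k-1) n m + (∑ l ∈ Finset.Icc 1 k, fwdShiftK d0 l m) * Λ k n m)
    (hdg : Λ (n+1) (n+1) m = 1) :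
    (∑ k ∈ Finset.Icc 1 n, Λ k n m * (c * wfun k m)) / (m : ℂ)
      = ∑ k ∈ Finset.Icc 1 (n+1), Λ k (n+1) m * (c * wfun k m) := by
  set S : ℕ → ℂ := fun k => ∑ l ∈ Finset.Icc 1 k, fwdShiftK d0 l m with hS
  have hkey : ∀ k, 1 ≤ k → wfun k m / (m : ℂ) = wfun (k+1) m + S k * wfun k m := by
    intro k hk
    have := key k m hk
    rwa [if_neg hm] at this
  have hcong : ∀ k ∈ Finset.Icc 1 (n+1), Λ k (n+1) m * (c * wfun k m)
      = Λ (k-1) n m * (c * wfun k m) + (S k * Λ k n m) * (c * wfun k m) := by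
    intro k hk
    rw [Finset.mem_Icc] at hk
    rcases eq_or_lt_of_le hk.2 with hEq | hlt
    · subst hEq
      have hk1 : n + 1 - 1 = n := by omega
      rw [hdg, hk1, h1, hout1]
      ring
    · rw [hrec1 k hk.1 (by omega)]
      ring
  rw [Finset.sum_congr rfl hcong, Finset.sum_add_distrib, Finset.sum_div]
  have hterm : ∀ k ∈ Finset.Icc 1 n, Λ k n m * (c * wfun k m) / (m : ℂ)
      = Λ k n m * (c * wfun (k+1) m) + (S k * Λ k n m) * (c * wfun k m) := by
    intro k hk
    rw [Finset.mem_Icc] at hk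
    calc Λ k n m * (c * wfun k m) / (m : ℂ)
        = Λ k n m * c * (wfun k m / (m : ℂ)) := by ring
      _ = Λ k n m * c * (wfun (k+1) m + S k * wfun k m) := by rw [hkey k hk.1]
      _ = _ := by ring
  rw [Finset.sum_congr rfl hterm, Finset.sum_add_distrib]
  congr 1
  · rw [← Finset.Ico_add_one_right_eq_Icc, Finset.sum_Ico_eq_sum_range,
        ← Finset.Ico_add_one_right_eq_Icc (b := n+1), Finset.sum_Ico_eq_sum_range]
    simp only [Nat.add_sub_cancel, Nat.succ_sub_one]
    rw [Finset.sum_range_succ']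
    have e1 : ∀ i : ℕ, 1 + (i + 1) - 1 = 1 + i := fun i => by omega
    have e2 : ∀ i : ℕ, 1 + (i + 1) = 1 + i + 1 := fun i => by omega
    simp only [e1, e2]
    have e3 : (1 + 0 - 1 : ℕ) = 0 := rfl
    rw [e3, h0, zero_mul, add_zero]
    simp only [Nat.add_sub_cancel]
  · rw [Finset.sum_Icc_succ_top (by omega : 1 ≤ n + 1), hout1]
    ring_nf
    exact Finset.sum_congr rfl (fun x _ => by ring)

/-- `(IR₀)ⁿ = ∑_{k=1}ⁿ Λ_{k,n} Iᵏ R₀ᵏ` where the diagonal operators `Λ_{k,n}` satisfy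
`Λ_{k,n} = Λ_{k−1,n−1} + (∑_{l=1}^k D₀^{(l)}) Λ_{k,n−1}`, with `Λ_{n,n} = id`,
`Λ_{0,n} = 0` and `Λ_{k,n} = 0` out of range. -/
theorem stmt11 (Λ : ℕ → ℕ → ℕ → ℂ)
    (hdiagid : ∀ n : ℕ, 1 ≤ n → Λ n n = fun _ => 1)
    (hzero : ∀ n : ℕ, 1 ≤ n → Λ 0 n = fun _ => 0)
    (hout : ∀ k n : ℕ, n < k → Λ k n = fun _ => 0)
    (hrec : ∀ k n : ℕ, 1 ≤ k → k < n → Λ k n = fun m =>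
      Λ (k - 1) (n - 1) m + (∑ l ∈ Finset.Icc 1 k, fwdShiftK d0 l m) * Λ k (n - 1) m)
    (n : ℕ) (hn : 1 ≤ n) (f : ℕ → ℂ) :
    (fun g => intOp (backShift g))^[n] f
      = fun m => ∑ k ∈ Finset.Icc 1 n, Λ k n m * (intOp^[k] (backShift^[k] f)) m := by
  induction n, hn using Nat.le_induction with
  | base =>
    funext m
    rw [Function.iterate_one, Finset.Icc_self, Finset.sum_singleton, hdiagid 1 le_rfl]
    simp
  | succ n hn ih =>
    funext m
    rw [Function.iterate_succ_apply', ih]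
    simp only [iter_eq]
    cases m with
    | zero =>
      have hL : intOp (backShift
          (fun m => ∑ k ∈ Finset.Icc 1 n, Λ k n m * (f m * wfun k m))) 0 = 0 := by
        simp [intOp]
      rw [hL]
      refine (Finset.sum_eq_zero fun k hk => ?_).symm
      rw [Finset.mem_Icc] at hk
      rw [wfun_zero k hk.1, mul_zero, mul_zero]
    | succ j =>
      have hL : intOp (backShift
          (fun m => ∑ k ∈ Finset.Icc 1 n, Λ k n m * (f m * wfun k m))) (j+1)
          = (∑ k ∈ Finset.Icc 1 n, Λ k n (j+1) * (f (j+1) * wfun k (j+1))) / ((j+1 : ℕ) : ℂ) := by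
        simp [intOp, backShift]
      rw [hL]
      apply step_sum Λ n (j+1) hn (by omega) (f (j+1))
      · rw [hdiagid n hn]
      · rw [hzero n hn]
      · rw [hout (n+1) n (by omega)]
      · intro k hk1 hk2
        rw [hrec k (n+1) hk1 (by omega)]
        simp only [Nat.add_sub_cancel]
      · rw [hdiagid (n+1) (by omega)]
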